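/- Let f: C_k^n → C_3 be a polymorphism (n ≥ 2, k ≥ 3 odd) and fix a coordinate i. For every unoriented edge e of C_k^{n-1}, the edge chain e ×_i O_k (the oriented 2k-cycle in C_k^n obtained by lifting e through coordinate i along the orientation O_k) satisfies f_E(e ×_i O_k) = 2d · O_3 for some integer d (i.e., the image is an even multiple of O_3). -/
import Mathlib


/-- The oriented edge `[u,v]` as an edge chain: the antisymmetrized generator. -/
noncomputable def oe {V : Type*} [DecidableEq V] (u v : V) : V × V →₀ ℤ :=
  Finsupp.single (u, v) 1 - Finsupp.single (v, u) 1

/-- The map on edge chains induced by a map on vertices. -/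
noncomputable def fE {V W : Type*} [DecidableEq V] [DecidableEq W] (f : V → W) :
    (V × V →₀ ℤ) →+ (W × W →₀ ℤ) :=
  Finsupp.mapDomain.addMonoidHom (Prod.map f f)

/-- Adjacency in the `m`-cycle on vertex set `ZMod m`. -/
def CycAdj (m : ℕ) (u v : ZMod m) : Prop := v = u + 1 ∨ v = u - 1

/-- The oriented cycle `O_m = [0,1] + [1,2] + ⋯ + [m-1,0]` as an edge chain. -/
noncomputable def cycO (m : ℕ) : ZMod m × ZMod m →₀ ℤ :=
  ∑ i ∈ Finset.range m, oe (i : ZMod m) ((i : ZMod m) + 1)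

/-- Adjacency in the direct power `C_kⁿ`: coordinatewise adjacency in `C_k`. -/
def PowAdj (k n : ℕ) (x y : Fin n → ZMod k) : Prop := ∀ i, CycAdj k (x i) (y i)

open Classical in
/-- The edge chain `O_{k,i}ⁿ` of all oriented edges of `C_kⁿ` whose `i`-th coordinate is
oriented according to `O_k`. -/
noncomputable def Okin (k n : ℕ) [NeZero k] (i : Fin n) :
    ((Fin n → ZMod k) × (Fin n → ZMod k)) →₀ ℤ :=
  ∑ p ∈ Finset.univ.filter
      (fun p : (Fin n → ZMod k) × (Fin n → ZMod k) =>
        PowAdj k n p.1 p.2 ∧ p.2 i = p.1 i + 1),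
    oe p.1 p.2

open Classical in
/-- The oriented `2k`-cycle `e ×ᵢ O_k` in `C_kⁿ`: for an unoriented edge `e = (ub, vb)` of
`C_k^{n-1}` (encoded by two vertices of `C_kⁿ` whose coordinates away from `i` form an
edge; the `i`-th coordinates are irrelevant), the chain of oriented edges of `C_kⁿ` whose
restriction away from coordinate `i` is `{ub, vb}` and whose `i`-th coordinate is oriented
according to `O_k`. -/
noncomputable def cross (k n : ℕ) [NeZero k] (i : Fin n) (ub vb : Fin n → ZMod k) :
    ((Fin n → ZMod k) × (Fin n → ZMod k)) →₀ ℤ :=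
  ∑ p ∈ Finset.univ.filter
      (fun p : (Fin n → ZMod k) × (Fin n → ZMod k) =>
        ((∀ j, j ≠ i → p.1 j = ub j ∧ p.2 j = vb j) ∨
         (∀ j, j ≠ i → p.1 j = vb j ∧ p.2 j = ub j)) ∧
        PowAdj k n p.1 p.2 ∧ p.2 i = p.1 i + 1),
    oe p.1 p.2

lemma oe_symm {V : Type*} [DecidableEq V] (u v : V) : oe u v = - oe v u := by
  simp only [oe]; abel

lemma zmod3_cases (a c : ZMod 3) (h : a ≠ c) : c = a + 1 ∨ a = c + 1 := by
  revert a c; decide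

lemma cycO3 : cycO 3 = oe 0 1 + oe 1 2 + oe (2 : ZMod 3) 0 := by
  unfold cycO
  rw [Finset.sum_range_succ, Finset.sum_range_succ, Finset.sum_range_succ,
    Finset.sum_range_zero]
  have h0 : ((0 : ℕ) : ZMod 3) = 0 := by decide
  have h1 : ((1 : ℕ) : ZMod 3) = 1 := by decide
  have h2 : ((2 : ℕ) : ZMod 3) = 2 := by decide
  rw [h0, h1, h2]
  norm_num
  have h3 : (3 : ZMod 3) = 0 := by decide
  rw [h3]

lemma key {ι : Type*} [Fintype ι] [DecidableEq ι] (F1 F2 : ι → ZMod 3) (σ : Equiv.Perm ι)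
    (hσ : ∀ j, F2 j = F1 (σ j)) (hne : ∀ j, F1 j ≠ F2 j) (hcard : Even (Fintype.card ι)) :
    ∃ d : ℤ, (∑ j, oe (F1 j) (F2 j)) = (2 * d) • cycO 3 := by
  classical
  set b : ι → ZMod 3 := fun j => if F2 j = F1 j + 1 then F1 j else F2 j with hb
  set ε : ι → ℤ := fun j => if F2 j = F1 j + 1 then 1 else -1 with hε
  have hcase : ∀ j, (F1 j = b j ∧ F2 j = b j + 1 ∧ ε j = 1) ∨
      (F1 j = b j + 1 ∧ F2 j = b j ∧ ε j = -1) := by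
    intro j
    by_cases h : F2 j = F1 j + 1
    · left; simp [hb, hε, h]
    · right
      rcases zmod3_cases _ _ (hne j) with h' | h'
      · exact absurd h' h
      · have hbj : b j = F2 j := by simp [hb, h]
        have hej : ε j = -1 := by simp [hε, h]
        exact ⟨by rw [hbj]; exact h', by rw [hbj], hej⟩
  set c : ZMod 3 → ℤ := fun a => ∑ j ∈ Finset.univ.filter (fun j => b j = a), ε j with hc
  -- fiberwise decomposition
  have hfib : ∀ {M : Type} [AddCommGroup M] (g : ZMod 3 → M),
      (∑ j, ε j • g (b j)) = c 0 • g 0 + c 1 • g 1 + c 2 • g 2 := by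
    intro M _ g
    rw [← Finset.sum_fiberwise Finset.univ b (fun j => ε j • g (b j))]
    have huniv : (Finset.univ : Finset (ZMod 3)) = {0, 1, 2} := by decide
    have inner : ∀ a : ZMod 3,
        (∑ j ∈ Finset.univ.filter (fun j => b j = a), ε j • g (b j)) = c a • g a := by
      intro a
      have h1 : (∑ j ∈ Finset.univ.filter (fun j => b j = a), ε j • g (b j))
          = ∑ j ∈ Finset.univ.filter (fun j => b j = a), ε j • g a := by
        apply Finset.sum_congr rfl
        intro j hj
        rw [(Finset.mem_filter.mp hj).2]
      rw [h1, ← Finset.sum_smul]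
    rw [huniv]
    rw [Finset.sum_insert (by decide), Finset.sum_insert (by decide),
      Finset.sum_singleton]
    rw [inner 0, inner 1, inner 2]
    exact (add_assoc _ _ _).symm
  have hfibZ : ∀ g : ZMod 3 → ℤ,
      (∑ j, ε j * g (b j)) = c 0 * g 0 + c 1 * g 1 + c 2 * g 2 := by
    intro g
    have := hfib g
    simpa [smul_eq_mul] using this
  -- flow condition
  have hflow : ∀ t : ZMod 3,
      c 0 * ((if (0:ZMod 3) = t then (1:ℤ) else 0) - (if (0:ZMod 3) + 1 = t then 1 else 0))
      + c 1 * ((if (1:ZMod 3) = t then (1:ℤ) else 0) - (if (1:ZMod 3) + 1 = t then 1 else 0))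
      + c 2 * ((if (2:ZMod 3) = t then (1:ℤ) else 0) - (if (2:ZMod 3) + 1 = t then 1 else 0))
      = 0 := by
    intro t
    rw [← hfibZ (fun a => (if a = t then (1:ℤ) else 0) - (if a + 1 = t then 1 else 0))]
    have hterm : ∀ j, ε j * ((if b j = t then (1:ℤ) else 0) - (if b j + 1 = t then 1 else 0))
        = (if F1 j = t then (1:ℤ) else 0) - (if F2 j = t then 1 else 0) := by
      intro j
      rcases hcase j with ⟨h1, h2, h3⟩ | ⟨h1, h2, h3⟩
      · rw [h1, h2, h3]; ring
      · rw [h1, h2, h3]; ring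
    rw [Finset.sum_congr rfl (fun j _ => hterm j)]
    rw [Finset.sum_sub_distrib]
    have : (∑ j, (if F2 j = t then (1:ℤ) else 0)) = ∑ j, (if F1 j = t then (1:ℤ) else 0) := by
      rw [Finset.sum_congr rfl (fun j _ => by rw [hσ j])]
      exact Equiv.sum_comp σ (fun j => if F1 j = t then (1:ℤ) else 0)
    rw [this, sub_self]
  have e0 := hflow 0
  have e1 := hflow 1
  simp only [show ((0:ZMod 3) = 0) = True from by decide,
    show ((0:ZMod 3)+1 = 0) = False from by decide,
    show ((1:ZMod 3) = 0) = False from by decide,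
    show ((1:ZMod 3)+1 = 0) = False from by decide,
    show ((2:ZMod 3) = 0) = False from by decide,
    show ((2:ZMod 3)+1 = 0) = True from by decide,
    show ((0:ZMod 3) = 1) = False from by decide,
    show ((0:ZMod 3)+1 = 1) = True from by decide,
    show ((1:ZMod 3) = 1) = True from by decide,
    show ((1:ZMod 3)+1 = 1) = False from by decide,
    show ((2:ZMod 3) = 1) = False from by decide,
    show ((2:ZMod 3)+1 = 1) = False from by decide,
    if_true, if_false] at e0 e1
  have h02 : c 0 = c 2 := by linarith
  have h10 : c 1 = c 0 := by linarith
  -- parity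
  have hpar : (∑ j, ε j) = c 0 + c 1 + c 2 := by
    have := hfibZ (fun _ => 1)
    simpa using this
  have hmod : ∀ j : ι, ε j % 2 = 1 := by
    intro j; rcases hcase j with ⟨_, _, h3⟩ | ⟨_, _, h3⟩ <;> rw [h3] <;> decide
  have hsum2 : (∑ j : ι, ε j) % 2 = 0 := by
    rw [Finset.sum_int_mod, Finset.sum_congr rfl (fun j _ => hmod j)]
    simp only [Finset.sum_const, Finset.card_univ, nsmul_eq_mul, mul_one]
    obtain ⟨r, hr⟩ := hcard
    rw [hr]; push_cast; omega
  have hpar2 : (c 0 + c 1 + c 2) % 2 = 0 := hpar ▸ hsum2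
  have hceven : 2 * (c 0 / 2) = c 0 := by omega
  refine ⟨c 0 / 2, ?_⟩
  have hterm2 : ∀ j, oe (F1 j) (F2 j) = ε j • oe (b j) (b j + 1) := by
    intro j
    rcases hcase j with ⟨h1, h2, h3⟩ | ⟨h1, h2, h3⟩
    · rw [h1, h2, h3, one_smul]
    · rw [h1, h2, h3, oe_symm]
      simp
  have hX : (∑ j, oe (F1 j) (F2 j))
      = c 0 • oe (0:ZMod 3) (0+1) + c 1 • oe 1 (1+1) + c 2 • oe 2 (2+1) := by
    rw [Finset.sum_congr rfl (fun j _ => hterm2 j)]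
    exact hfib (fun a => oe a (a+1))
  rw [hX, show (0:ZMod 3)+1 = 1 from by decide, show (1:ZMod 3)+1 = 2 from by decide,
    show (2:ZMod 3)+1 = 0 from by decide, cycO3, hceven, h10, ← h02,
    smul_add, smul_add]

lemma fE_oe {V W : Type*} [DecidableEq V] [DecidableEq W] (f : V → W) (u v : V) :
    fE f (oe u v) = oe (f u) (f v) := by
  unfold oe
  rw [map_sub]
  simp [fE, Finsupp.mapDomain.addMonoidHom_apply, Finsupp.mapDomain_single]

lemma cycAdj_symm {m : ℕ} {u v : ZMod m} (h : CycAdj m u v) : CycAdj m v u := by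
  rcases h with h | h
  · right; rw [h]; ring
  · left; rw [h]; ring

lemma cycAdj_ne {m : ℕ} (hm : 3 ≤ m) {u v : ZMod m} (h : CycAdj m u v) : u ≠ v := by
  haveI : Fact (1 < m) := ⟨by omega⟩
  rintro rfl
  rcases h with h | h
  · exact one_ne_zero (left_eq_add.mp h)
  · exact one_ne_zero (sub_eq_self.mp h.symm)

/-- For a polymorphism `f : C_kⁿ → C_3` (`n ≥ 2`, `k ≥ 3` odd), a coordinate `i`, and any
unoriented edge `e = (ub, vb)` of `C_k^{n-1}`, the image of the lifted oriented `2k`-cycle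
`e ×ᵢ O_k` under `f_E` is an even multiple of `O_3`. -/
theorem cross_even_degree (k n : ℕ) [NeZero k] (hk : 3 ≤ k) (hkodd : Odd k)
    (hn : 2 ≤ n) (f : (Fin n → ZMod k) → ZMod 3)
    (hf : ∀ x y, PowAdj k n x y → f x ≠ f y) (i : Fin n)
    (ub vb : Fin n → ZMod k) (he : ∀ j, j ≠ i → CycAdj k (ub j) (vb j)) :
    ∃ d : ℤ, fE f (cross k n i ub vb) = (2 * d) • cycO 3 := by
  classical
  obtain ⟨j0, hj0⟩ := Fintype.exists_ne_of_one_lt_card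
    (by rw [Fintype.card_fin]; omega : 1 < Fintype.card (Fin n)) i
  have hne0 : ub j0 ≠ vb j0 := cycAdj_ne hk (he j0 hj0)
  set φ : ZMod k × Bool → (Fin n → ZMod k) × (Fin n → ZMod k) := fun q =>
    if q.2 then (Function.update ub i q.1, Function.update vb i (q.1 + 1))
    else (Function.update vb i q.1, Function.update ub i (q.1 + 1)) with hφ
  have hadj : ∀ q, PowAdj k n (φ q).1 (φ q).2 := by
    rintro ⟨a, s⟩ j
    by_cases hji : j = i
    · subst hji
      cases s <;> simp only [hφ, if_true, if_false, Bool.false_eq_true,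
        Function.update_self] <;> exact Or.inl rfl
    · cases s <;> simp only [hφ, if_true, if_false, Bool.false_eq_true,
        Function.update_of_ne hji]
      · exact cycAdj_symm (he j hji)
      · exact he j hji
  have hcond : ∀ q, (φ q).2 i = (φ q).1 i + 1 := by
    rintro ⟨a, s⟩
    cases s <;> simp only [hφ, if_true, if_false, Bool.false_eq_true,
      Function.update_self]
  have upd_inj : ∀ (x : Fin n → ZMod k) a a',
      Function.update x i a = Function.update x i a' → a = a' := by
    intro x a a' h
    have := congrFun h i
    rwa [Function.update_self, Function.update_self] at this
  have upd_ne : ∀ a a', Function.update ub i a ≠ Function.update vb i a' := by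
    intro a a' h
    have := congrFun h j0
    rw [Function.update_of_ne hj0, Function.update_of_ne hj0] at this
    exact hne0 this
  have hinj : ∀ x ∈ (Finset.univ : Finset (ZMod k × Bool)), ∀ y ∈ Finset.univ,
      φ x = φ y → x = y := by
    rintro ⟨a, s⟩ - ⟨a', s'⟩ - hEq
    cases s <;> cases s' <;>
      simp only [hφ, if_true, if_false, Bool.false_eq_true, Prod.mk.injEq] at hEq ⊢
    · exact ⟨upd_inj vb a a' hEq.1, trivial⟩
    · exact absurd hEq.1.symm (upd_ne a' a)
    · exact absurd hEq.1 (upd_ne a a')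
    · exact ⟨upd_inj ub a a' hEq.1, trivial⟩
  have hset : (Finset.univ.filter
      (fun p : (Fin n → ZMod k) × (Fin n → ZMod k) =>
        ((∀ j, j ≠ i → p.1 j = ub j ∧ p.2 j = vb j) ∨
         (∀ j, j ≠ i → p.1 j = vb j ∧ p.2 j = ub j)) ∧
        PowAdj k n p.1 p.2 ∧ p.2 i = p.1 i + 1))
      = Finset.image φ Finset.univ := by
    ext p
    simp only [Finset.mem_filter, Finset.mem_univ, true_and, Finset.mem_image]
    constructor
    · rintro ⟨hC, hP, hi⟩
      rcases hC with hC | hC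
      · have h1 : Function.update ub i (p.1 i) = p.1 := by
          funext j
          by_cases hji : j = i
          · subst hji; rw [Function.update_self]
          · rw [Function.update_of_ne hji]; exact (hC j hji).1.symm
        have h2 : Function.update vb i (p.1 i + 1) = p.2 := by
          funext j
          by_cases hji : j = i
          · subst hji; rw [Function.update_self]; exact hi.symm
          · rw [Function.update_of_ne hji]; exact (hC j hji).2.symm
        exact ⟨(p.1 i, true), by
          simp only [hφ, if_true]
          exact Prod.ext h1 h2⟩
      · have h1 : Function.update vb i (p.1 i) = p.1 := by
          funext j
          by_cases hji : j = i
          · subst hji; rw [Function.update_self]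
          · rw [Function.update_of_ne hji]; exact (hC j hji).1.symm
        have h2 : Function.update ub i (p.1 i + 1) = p.2 := by
          funext j
          by_cases hji : j = i
          · subst hji; rw [Function.update_self]; exact hi.symm
          · rw [Function.update_of_ne hji]; exact (hC j hji).2.symm
        exact ⟨(p.1 i, false), by
          simp only [hφ, if_false, Bool.false_eq_true]
          exact Prod.ext h1 h2⟩
    · rintro ⟨⟨a, s⟩, rfl⟩
      refine ⟨?_, hadj _, hcond _⟩
      cases s
      · right
        intro j hji
        simp only [hφ, if_false, Bool.false_eq_true, Function.update_of_ne hji]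
        exact ⟨trivial, trivial⟩
      · left
        intro j hji
        simp only [hφ, if_true, Function.update_of_ne hji]
        exact ⟨trivial, trivial⟩
  have hcross : cross k n i ub vb = ∑ q : ZMod k × Bool, oe (φ q).1 (φ q).2 := by
    unfold cross
    rw [Finset.sum_congr hset (fun _ _ => rfl), Finset.sum_image hinj]
  have himg : fE f (cross k n i ub vb)
      = ∑ q : ZMod k × Bool, oe (f (φ q).1) (f (φ q).2) := by
    rw [hcross, map_sum]
    exact Finset.sum_congr rfl (fun q _ => fE_oe f _ _)
  set σ : Equiv.Perm (ZMod k × Bool) :=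
    ⟨fun q => (q.1 + 1, !q.2), fun q => (q.1 - 1, !q.2),
      by rintro ⟨a, s⟩; simp, by rintro ⟨a, s⟩; simp⟩ with hσdef
  have hσ : ∀ q, f (φ q).2 = f (φ (σ q)).1 := by
    rintro ⟨a, s⟩
    cases s <;> simp [hσdef, hφ]
  have hne : ∀ q, f (φ q).1 ≠ f (φ q).2 := fun q => hf _ _ (hadj q)
  have hcard : Even (Fintype.card (ZMod k × Bool)) := by
    rw [Fintype.card_prod, ZMod.card, Fintype.card_bool]
    exact ⟨k, by ring⟩
  obtain ⟨d, hd⟩ := key (fun q => f (φ q).1) (fun q => f (φ q).2) σ hσ hne hcard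
  exact ⟨d, by rw [himg]; exact hd⟩
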